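/- arXiv:1009.3145 — 2 statements merged into one kernel-verified Lean document; each statement's English description precedes it below -/
import Mathlib

section
/- Let d > 0, σ > 0, Δ > 0, and let L be distributed as the absolute value of a centered normal random variable with standard deviation σd. Let T be the 2Δ-periodic triangle wave with T(0)=1, T(Δ)=0, linear in between. Then E[T(L)] = 1/2 + Σ_{i=0}^{∞} exp(−(π(2i+1)σd/(√2 Δ))²) / (π(i+1/2))². -/
open MeasureTheory ProbabilityTheory Real
open scoped NNReal ENNReal

/-- Real modulo: `rmod a b = a - b⌊a/b⌋`. -/
noncomputable def rmod (a b : ℝ) : ℝ := a - b * ⌊a / b⌋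

/-- The even `2Δ`-periodic triangle wave with `T(0) = 1`, `T(Δ) = 0`, linear in between. -/
noncomputable def tri (Δ l : ℝ) : ℝ :=
  if rmod l (2 * Δ) ≤ Δ then 1 - rmod l (2 * Δ) / Δ else rmod l (2 * Δ) / Δ - 1


lemma rmod_nonneg {b : ℝ} (hb : 0 < b) (a : ℝ) : 0 ≤ rmod a b := by
  have h := Int.floor_le (a / b)
  have : b * ⌊a / b⌋ ≤ a := by
    calc b * ⌊a / b⌋ ≤ b * (a / b) := by nlinarith
    _ = a := by field_simp
  simpa [rmod] using this

lemma rmod_lt {b : ℝ} (hb : 0 < b) (a : ℝ) : rmod a b < b := by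
  have h := Int.lt_floor_add_one (a / b)
  have : a < b * (⌊a / b⌋ + 1) := by
    calc a = b * (a / b) := by field_simp
    _ < b * (⌊a / b⌋ + 1) := by nlinarith
  simp only [rmod]
  nlinarith

lemma bern2 : Polynomial.bernoulli 2 = Polynomial.X ^ 2 - Polynomial.X + Polynomial.C (1/6 : ℚ) := by
  rw [Polynomial.bernoulli_def]
  simp [Finset.sum_range_succ, _root_.bernoulli, bernoulli'_two,
    bernoulli'_one, bernoulli'_zero]
  rw [show ((Polynomial.monomial 1) (1:ℚ)) = Polynomial.X from Polynomial.monomial_one_one_eq_X,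
    show ((Polynomial.monomial 2) (1:ℚ)) = Polynomial.X ^ 2 by
      rw [← Polynomial.C_mul_X_pow_eq_monomial]; simp]
  ring

lemma hasSum_cos_all {x : ℝ} (hx : x ∈ Set.Icc (0:ℝ) 1) :
    HasSum (fun n : ℕ => 1 / (n:ℝ)^2 * Real.cos (2*π*n*x)) (π^2 * (x^2 - x + 1/6)) := by
  have h := hasSum_one_div_nat_pow_mul_cos (k := 1) one_ne_zero hx
  norm_num [bern2, map_add, map_sub, map_pow] at h
  convert h using 2 <;> ring

lemma summable_inv_odd_sq : Summable (fun i : ℕ => 1 / ((2*(i:ℝ)+1))^2) := by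
  have h : Summable (fun i : ℕ => 1 / ((i:ℝ)+1)^2) := by
    have := Real.summable_one_div_nat_pow.mpr (le_refl 2)
    exact_mod_cast (summable_nat_add_iff 1).mpr this
  refine h.of_nonneg_of_le (fun i => by positivity) (fun i => ?_)
  refine one_div_le_one_div_of_le (by positivity) ?_
  nlinarith [Nat.cast_nonneg (α := ℝ) i]

lemma hasSum_cos_odd {u : ℝ} (hu : u ∈ Set.Icc (0:ℝ) (1/2)) :
    HasSum (fun i : ℕ => 1 / ((2*(i:ℝ)+1))^2 * Real.cos (2*π*(2*i+1)*u))
      (π^2 * (1/8 - u/2)) := by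
  obtain ⟨hu0, hu1⟩ := hu
  set f : ℕ → ℝ := fun n => 1 / (n:ℝ)^2 * Real.cos (2*π*n*u) with hf
  have htot : HasSum f (π^2 * (u^2 - u + 1/6)) := hasSum_cos_all ⟨hu0, by linarith⟩
  have heven : HasSum (fun i => f (2*i)) (π^2 * ((2*u)^2 - 2*u + 1/6) / 4) := by
    have h2 : HasSum (fun n : ℕ => 1 / (n:ℝ)^2 * Real.cos (2*π*n*(2*u)))
        (π^2 * ((2*u)^2 - 2*u + 1/6)) := hasSum_cos_all ⟨by linarith, by linarith⟩
    have := h2.div_const 4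
    refine this.congr_fun fun i => ?_
    simp only [hf]
    rcases Nat.eq_zero_or_pos i with h | h
    · simp [h]
    · have : ((2*i : ℕ) : ℝ) = 2 * i := by push_cast; ring
      rw [this]
      have hi : ((i:ℝ))^2 ≠ 0 := by positivity
      field_simp
      ring_nf
  have hodd : Summable (fun i => f (2*i+1)) := by
    refine Summable.of_norm ?_
    refine summable_inv_odd_sq.of_nonneg_of_le (fun i => norm_nonneg _) (fun i => ?_)
    have hc : ((2*i+1 : ℕ) : ℝ) = 2*i+1 := by push_cast; ring
    simp only [hf, hc, norm_mul]
    rw [Real.norm_eq_abs (1/(2*(i:ℝ)+1)^2), abs_of_nonneg (by positivity),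
      Real.norm_eq_abs]
    calc (1/(2*(i:ℝ)+1)^2) * |Real.cos (2*π*(2*(i:ℝ)+1)*u)|
        ≤ (1/(2*(i:ℝ)+1)^2) * 1 := by
          gcongr
          exact Real.abs_cos_le_one _
      _ = 1/(2*(i:ℝ)+1)^2 := by ring
  have hsplit := (heven.even_add_odd hodd.hasSum).unique htot
  have : HasSum (fun i => f (2*i+1)) (π^2 * (u^2-u+1/6) - π^2 * ((2*u)^2 - 2*u + 1/6)/4) := by
    have := hodd.hasSum
    rwa [show ∑' i, f (2*i+1) = π^2 * (u^2-u+1/6) - π^2 * ((2*u)^2 - 2*u + 1/6)/4 by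
      linarith] at this
  have heq : π^2 * (u^2-u+1/6) - π^2*((2*u)^2-2*u+1/6)/4 = π^2 * (1/8 - u/2) := by ring
  rw [heq] at this
  refine this.congr_fun fun i => ?_
  simp only [hf]
  have hc : ((2*i+1 : ℕ) : ℝ) = 2*i+1 := by push_cast; ring
  rw [hc]

lemma tri_hasSum {Δ : ℝ} (hΔ : 0 < Δ) (x : ℝ) :
    HasSum (fun i : ℕ => 4 / (π^2 * (2*(i:ℝ)+1)^2) * Real.cos ((2*(i:ℝ)+1) * π * x / Δ))
      (tri Δ x - 1/2) := by
  have h2Δ : (0:ℝ) < 2*Δ := by linarith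
  have hπ : π ≠ 0 := Real.pi_ne_zero
  have hΔ' : Δ ≠ 0 := hΔ.ne'
  set r := rmod x (2*Δ) with hrdef
  have hr0 : 0 ≤ r := rmod_nonneg h2Δ x
  have hr2 : r < 2*Δ := rmod_lt h2Δ x
  set k : ℤ := ⌊x / (2*Δ)⌋ with hk
  have hx : x = r + 2*Δ*k := by rw [hrdef]; simp [rmod, hk]
  have hcosx : ∀ i : ℕ, Real.cos ((2*(i:ℝ)+1)*π*x/Δ) = Real.cos ((2*(i:ℝ)+1)*π*r/Δ) := by
    intro i
    have harg : (2*(i:ℝ)+1)*π*x/Δ = (2*(i:ℝ)+1)*π*r/Δ + (((2*i+1 : ℕ)*k : ℤ) : ℝ) * (2*π) := by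
      rw [hx]; push_cast; field_simp
    rw [harg, Real.cos_add_int_mul_two_pi]
  simp only [hcosx]
  by_cases hcase : r ≤ Δ
  · have htri : tri Δ x = 1 - r/Δ := by
      simp only [tri, ← hrdef, if_pos hcase]
    set u := r/(2*Δ) with hu
    have hum : u ∈ Set.Icc (0:ℝ) (1/2) := ⟨by positivity, by
      rw [hu, div_le_iff₀ h2Δ]; linarith⟩
    have h := (hasSum_cos_odd hum).mul_left (4/π^2)
    have hval : (4/π^2) * (π^2*(1/8 - u/2)) = tri Δ x - 1/2 := by
      rw [htri, hu]; field_simp; ring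
    rw [← hval]
    refine h.congr_fun fun i => ?_
    rw [hu]
    field_simp
  · push_neg at hcase
    have htri : tri Δ x = r/Δ - 1 := by
      simp only [tri, ← hrdef, if_neg (not_le.mpr hcase)]
    have hcosr : ∀ i : ℕ, Real.cos ((2*(i:ℝ)+1)*π*r/Δ)
        = Real.cos ((2*(i:ℝ)+1)*π*(2*Δ-r)/Δ) := by
      intro i
      have harg : (2*(i:ℝ)+1)*π*(2*Δ-r)/Δ
          = -((2*(i:ℝ)+1)*π*r/Δ) + (((2*i+1 : ℕ) : ℤ) : ℝ) * (2*π) := by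
        push_cast; field_simp; ring
      rw [harg, Real.cos_add_int_mul_two_pi, Real.cos_neg]
    simp only [hcosr]
    set u := (2*Δ-r)/(2*Δ) with hu
    have hum : u ∈ Set.Icc (0:ℝ) (1/2) := ⟨by
        rw [hu]; apply div_nonneg (by linarith) (by linarith), by
        rw [hu, div_le_iff₀ h2Δ]; linarith⟩
    have h := (hasSum_cos_odd hum).mul_left (4/π^2)
    have hval : (4/π^2) * (π^2*(1/8 - u/2)) = tri Δ x - 1/2 := by
      rw [htri, hu]; field_simp; ring
    rw [← hval]
    refine h.congr_fun fun i => ?_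
    rw [hu]
    field_simp

lemma integral_cos_mul_gaussian (v : NNReal) (hv : v ≠ 0) (a : ℝ) :
    ∫ z, Real.cos (a * z) ∂(gaussianReal 0 v) = Real.exp (-(v:ℝ) * a ^ 2 / 2) := by
  have hv0 : (0:ℝ) < (v:ℝ) := by
    refine lt_of_le_of_ne v.2 ?_
    exact fun h => hv (by exact_mod_cast h.symm)
  set r : ℝ := (2 * (v:ℝ))⁻¹ with hr
  have hr0 : 0 < r := by positivity
  -- key complex computation
  have key : ∫ x : ℝ, Real.exp (-(r * x ^ 2)) * Real.cos (a * x)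
      = Real.sqrt (2 * π * (v:ℝ)) * Real.exp (-(v:ℝ) * a ^ 2 / 2) := by
    have hb : (0:ℝ) < ((r : ℂ)).re := by simpa using hr0
    have h := fourierIntegral_gaussian (b := (r:ℂ)) hb (a : ℂ)
    have hint : Integrable (fun x : ℝ =>
        Complex.exp (Complex.I * a * x) * Complex.exp (-(r:ℂ) * x ^ 2)) := by
      have h2 := integrable_cexp_quadratic (b := (r:ℂ)) hb (Complex.I * a) 0
      refine h2.congr' ?_ (Filter.EventuallyEq.of_eq ?_)
      · exact h2.aestronglyMeasurable.congr (Filter.EventuallyEq.of_eq (funext fun x => by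
          rw [← Complex.exp_add]; ring_nf))
      · funext x; rw [← Complex.exp_add]; ring_nf
    have hre0 := integral_re (𝕜 := ℂ) hint
    simp only [RCLike.re_to_complex] at hre0
    have hre := hre0.trans (congrArg Complex.re h)
    have lhs_eq : ∀ x : ℝ, (Complex.exp (Complex.I * a * x) * Complex.exp (-(r:ℂ) * x ^ 2)).re
        = Real.exp (-(r * x ^ 2)) * Real.cos (a * x) := by
      intro x
      rw [← Complex.exp_add]
      have hz : Complex.I * (a:ℂ) * x + -(r:ℂ) * x ^ 2
          = ((-(r * x ^ 2) : ℝ) : ℂ) + ((a * x : ℝ) : ℂ) * Complex.I := by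
        push_cast; ring
      rw [hz, Complex.exp_re]
      simp [← Complex.ofReal_pow]
    simp only [lhs_eq] at hre
    rw [hre]
    have h1 : ((π : ℂ) / (r:ℂ)) = ((2 * π * (v:ℝ) : ℝ) : ℂ) := by
      push_cast
      rw [hr]; push_cast
      field_simp
    have h2 : (-(a:ℂ) ^ 2 / (4 * (r:ℂ))) = ((-(v:ℝ) * a ^ 2 / 2 : ℝ) : ℂ) := by
      push_cast
      rw [hr]; push_cast
      field_simp
      ring
    rw [h1, h2, ← Complex.ofReal_exp]
    rw [show ((1:ℂ)/2) = ((1/2 : ℝ) : ℂ) by norm_num,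
      ← Complex.ofReal_cpow (by positivity), ← Real.sqrt_eq_rpow]
    rw [← Complex.ofReal_mul]
    exact Complex.ofReal_re _
  -- density rewriting
  rw [gaussianReal_of_var_ne_zero 0 hv]
  have hmeas : Measurable fun x => Real.toNNReal (gaussianPDFReal 0 v x) :=
    (measurable_gaussianPDFReal 0 v).real_toNNReal
  rw [show gaussianPDF 0 v = fun x => ((Real.toNNReal (gaussianPDFReal 0 v x) : ℝ≥0) : ℝ≥0∞)
      from rfl]
  rw [integral_withDensity_eq_integral_smul hmeas]
  simp only [NNReal.smul_def, Real.coe_toNNReal _ (gaussianPDFReal_nonneg 0 v _)]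
  calc ∫ x, gaussianPDFReal 0 v x * Real.cos (a * x)
      = (Real.sqrt (2*π*(v:ℝ)))⁻¹ * ∫ x, Real.exp (-(r * x^2)) * Real.cos (a * x) := by
        rw [← integral_const_mul]
        congr 1; funext x
        simp only [gaussianPDFReal, sub_zero]
        have hx : -x^2/(2*(v:ℝ)) = -(r * x^2) := by
          rw [hr]; field_simp
        rw [hx]; ring
    _ = Real.exp (-(v:ℝ) * a^2/2) := by
        rw [key, ← mul_assoc, inv_mul_cancel₀ (Real.sqrt_pos.mpr (by positivity)).ne', one_mul]


lemma tri_abs_le {Δ : ℝ} (hΔ : 0 < Δ) (l : ℝ) : |tri Δ l| ≤ 1 := by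
  have h2Δ : (0:ℝ) < 2*Δ := by linarith
  have hr0 : 0 ≤ rmod l (2*Δ) := rmod_nonneg h2Δ l
  have hr2 : rmod l (2*Δ) < 2*Δ := rmod_lt h2Δ l
  rw [tri]
  split_ifs with h
  · rw [abs_le]
    constructor
    · have : rmod l (2*Δ)/Δ ≤ 1 := by rw [div_le_one hΔ]; linarith
      linarith
    · have : 0 ≤ rmod l (2*Δ)/Δ := by positivity
      linarith
  · push_neg at h
    rw [abs_le]
    constructor
    · have : 1 ≤ rmod l (2*Δ)/Δ := by rw [le_div_iff₀ hΔ]; linarith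
      linarith
    · have : rmod l (2*Δ)/Δ ≤ 2 := by rw [div_le_iff₀ hΔ]; linarith
      linarith

lemma measurable_tri_abs (Δ : ℝ) : Measurable (fun z : ℝ => tri Δ |z|) := by
  have hrm : Measurable (fun l : ℝ => rmod l (2*Δ)) := by
    unfold rmod
    exact measurable_id.sub (measurable_const.mul
      (Measurable.comp (fun s _ => trivial) ((measurable_id.div_const _).floor)))
  have h : Measurable (fun l : ℝ => tri Δ l) := by
    unfold tri
    exact Measurable.ite (measurableSet_le hrm measurable_const)
      ((measurable_const.sub (hrm.div_const Δ)))
      ((hrm.div_const Δ).sub measurable_const)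
  exact h.comp measurable_abs

/-- If `L = |Z|` with `Z ~ N(0,(σd)²)` and `T` is the `2Δ`-periodic triangle wave, then
`E[T(L)] = 1/2 + Σ_{i=0}^∞ exp(−(π(2i+1)σd/(√2Δ))²)/(π(i+1/2))²`. -/
theorem expectation_tri_of_abs_gaussian (σ d Δ : ℝ) (hσ : 0 < σ) (hd : 0 < d) (hΔ : 0 < Δ)
    (v : NNReal) (hv : (v : ℝ) = (σ * d) ^ 2) :
    ∫ z, tri Δ |z| ∂(gaussianReal 0 v) = 1 / 2 +
      ∑' i : ℕ, Real.exp (-(π * (2 * (i : ℝ) + 1) * σ * d / (Real.sqrt 2 * Δ)) ^ 2) /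
        (π * ((i : ℝ) + 1 / 2)) ^ 2 := by
  have hπ : π ≠ 0 := Real.pi_ne_zero
  have hv0 : (0:ℝ) < (v:ℝ) := by rw [hv]; positivity
  have hvne : v ≠ 0 := by
    intro h; rw [h] at hv0; simp at hv0
  set μ := gaussianReal 0 v with hμ
  have : IsProbabilityMeasure μ := by rw [hμ]; infer_instance
  -- the family of Fourier terms, as functions of z
  set F : ℕ → ℝ → ℝ := fun i z =>
    4 / (π^2 * (2*(i:ℝ)+1)^2) * Real.cos ((2*(i:ℝ)+1) * π / Δ * z) with hF
  have hFz : ∀ i z, F i z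
      = 4 / (π^2 * (2*(i:ℝ)+1)^2) * Real.cos ((2*(i:ℝ)+1) * π * |z| / Δ) := by
    intro i z
    rw [hF]
    rcases le_or_gt 0 z with h | h
    · rw [abs_of_nonneg h]; ring_nf
    · rw [abs_of_neg h]
      rw [show (2*(i:ℝ)+1) * π * -z / Δ = -((2*(i:ℝ)+1) * π / Δ * z) by ring, Real.cos_neg]
  have hsum : ∀ z : ℝ, HasSum (fun i => F i z) (tri Δ |z| - 1/2) := by
    intro z
    have := tri_hasSum hΔ |z|
    exact this.congr_fun fun i => (hFz i z)
  -- integrability of each term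
  have hFint : ∀ i, Integrable (F i) μ := by
    intro i
    refine Integrable.mono' (integrable_const (4 / (π^2 * (2*(i:ℝ)+1)^2))) ?_
      (Filter.Eventually.of_forall fun z => ?_)
    · exact ((continuous_const.mul (Real.continuous_cos.comp
        (continuous_const.mul continuous_id))).aestronglyMeasurable)
    · rw [hF, norm_mul]
      calc ‖4 / (π^2 * (2*(i:ℝ)+1)^2)‖ * ‖Real.cos ((2*(i:ℝ)+1) * π / Δ * z)‖
          ≤ ‖4 / (π^2 * (2*(i:ℝ)+1)^2)‖ * 1 := by
            gcongr
            rw [Real.norm_eq_abs]; exact Real.abs_cos_le_one _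
        _ = 4 / (π^2 * (2*(i:ℝ)+1)^2) := by
            rw [mul_one, Real.norm_eq_abs, abs_of_nonneg (by positivity)]
  -- summability of the norms of integrals
  have hnorm_sum : Summable (fun i => ∫ z, ‖F i z‖ ∂μ) := by
    refine Summable.of_nonneg_of_le (fun i => integral_nonneg fun z => norm_nonneg _)
      (fun i => ?_) (summable_inv_odd_sq.mul_left (4/π^2))
    calc ∫ z, ‖F i z‖ ∂μ ≤ ∫ _z, 4 / (π^2 * (2*(i:ℝ)+1)^2) ∂μ := by
          refine integral_mono_of_nonneg (Filter.Eventually.of_forall fun z => norm_nonneg _)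
            (integrable_const _) (Filter.Eventually.of_forall fun z => ?_)
          simp only [hF, norm_mul]
          calc ‖4 / (π^2 * (2*(i:ℝ)+1)^2)‖ * ‖Real.cos ((2*(i:ℝ)+1) * π / Δ * z)‖
              ≤ ‖4 / (π^2 * (2*(i:ℝ)+1)^2)‖ * 1 := by
                gcongr
                rw [Real.norm_eq_abs]; exact Real.abs_cos_le_one _
            _ = 4 / (π^2 * (2*(i:ℝ)+1)^2) := by
                rw [mul_one, Real.norm_eq_abs, abs_of_nonneg (by positivity)]
      _ = 4/π^2 * (1 / (2*(i:ℝ)+1)^2) := by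
          rw [integral_const]
          simp only [probReal_univ, measure_univ, ENNReal.toReal_one, smul_eq_mul, one_mul]
          have hne : (2*(i:ℝ)+1) ≠ 0 := by positivity
          field_simp
  -- value of each term integral
  have hFval : ∀ i : ℕ, ∫ z, F i z ∂μ
      = 4 / (π^2 * (2*(i:ℝ)+1)^2)
        * Real.exp (-(v:ℝ) * ((2*(i:ℝ)+1) * π / Δ)^2 / 2) := by
    intro i
    rw [hF]
    rw [integral_const_mul, integral_cos_mul_gaussian v hvne ((2*(i:ℝ)+1) * π / Δ)]
  -- swap sum and integral
  have hswap := integral_tsum_of_summable_integral_norm hFint hnorm_sum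
  -- integrability of the tail
  have htail_int : Integrable (fun z => tri Δ |z| - 1/2) μ := by
    refine Integrable.mono' (integrable_const (3/2 : ℝ)) ?_
      (Filter.Eventually.of_forall fun z => ?_)
    · exact ((measurable_tri_abs Δ).sub measurable_const).aestronglyMeasurable
    · calc ‖tri Δ |z| - 1/2‖ ≤ ‖tri Δ |z|‖ + ‖(1/2 : ℝ)‖ := norm_sub_le _ _
        _ ≤ 1 + 1/2 := by
            gcongr
            · rw [Real.norm_eq_abs]; exact tri_abs_le hΔ _
            · rw [Real.norm_eq_abs]; rw [abs_of_nonneg]; norm_num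
        _ = 3/2 := by norm_num
  -- main computation
  have hmain : ∫ z, tri Δ |z| ∂μ = 1/2 + ∑' i, ∫ z, F i z ∂μ := by
    have h1 : (fun z => tri Δ |z|) = fun z => 1/2 + (tri Δ |z| - 1/2) := by
      funext z; ring
    rw [h1, integral_add (integrable_const _) htail_int, integral_const]
    simp only [probReal_univ, measure_univ, ENNReal.toReal_one, one_smul, smul_eq_mul, one_mul]
    congr 1
    have h2 : ∫ z, (tri Δ |z| - 1/2) ∂μ = ∫ z, (∑' i, F i z) ∂μ :=
      integral_congr_ae (Filter.Eventually.of_forall fun z => ((hsum z).tsum_eq).symm)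
    rw [h2, ← hswap]
  rw [hmain]
  congr 1
  refine tsum_congr fun i => ?_
  rw [hFval i]
  have h2 : Real.sqrt 2 ^ 2 = 2 := Real.sq_sqrt (by norm_num)
  have hs2 : Real.sqrt 2 ≠ 0 := by positivity
  have hΔ' : Δ ≠ 0 := hΔ.ne'
  have hexp : -(v:ℝ) * ((2*(i:ℝ)+1) * π / Δ)^2 / 2
      = -(π * (2 * (i : ℝ) + 1) * σ * d / (Real.sqrt 2 * Δ)) ^ 2 := by
    rw [hv, show -(π * (2*(i:ℝ)+1) * σ * d / (Real.sqrt 2 * Δ))^2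
        = -((π*(2*(i:ℝ)+1)*σ*d)^2/(2*Δ^2)) by rw [div_pow, mul_pow (Real.sqrt 2) Δ 2, h2]]
    field_simp
  rw [hexp]
  have hne : (2*(i:ℝ)+1) ≠ 0 := by positivity
  field_simp
  ring
end

section
/- Let S be a union of L subspaces of ℝ^N, each of dimension at most K, intersected with the unit ball, and let the measurement system satisfy the single-ball-pair bound p ≤ c_r for balls of radius ε = 3d/(c_o√N) (after parameter choices). Then P(∃ x,x' ∈ S, ‖x−x'‖₂ > d, with identical M-bit quantized measurements) ≤ L²·(c_o√N/d)^{2K}·c_r^M = exp(2 log L + 2K log(c_o√N/d) − M log(1/c_r)), which tends to 0 exponentially provided M ≥ C(log L + K log(N/d)) for a suitable constant C. -/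
open MeasureTheory ProbabilityTheory Real

/-- Binary quantizer `Q(x) = ⌈x⌉ mod 2`. -/
noncomputable def Q (x : ℝ) : ℤ := ⌈x⌉ % 2

/-- The uniform probability measure on `[0,Δ]`. -/
noncomputable def unif (Δ : ℝ) : Measure ℝ :=
  (ENNReal.ofReal Δ)⁻¹ • volume.restrict (Set.Icc 0 Δ)

/-- Euclidean `ε`-ball around `x` in `ℝ^N`. -/
def ballE {N : ℕ} (ε : ℝ) (x : Fin N → ℝ) : Set (Fin N → ℝ) :=
  {v | Real.sqrt (∑ i, (v i - x i) ^ 2) ≤ ε}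

/-- Distribution of a single random measurement `ω = (φ, w)`. -/
noncomputable def measLaw (N : ℕ) (v : NNReal) (Δ : ℝ) : Measure ((Fin N → ℝ) × ℝ) :=
  (Measure.pi fun _ : Fin N => gaussianReal 0 v).prod (unif Δ)

/-- Single quantized measurement `q(x) = Q((⟨x,φ⟩+w)/Δ)` for `ω = (φ,w)`. -/
noncomputable def qmeas {N : ℕ} (Δ : ℝ) (ω : (Fin N → ℝ) × ℝ) (x : Fin N → ℝ) : ℤ :=
  Q ((∑ i, x i * ω.1 i + ω.2) / Δ)

namespace UoSAux

/-- Transport a plain vector to `EuclideanSpace`. -/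
noncomputable def toE {n : ℕ} (x : Fin n → ℝ) : EuclideanSpace ℝ (Fin n) :=
  (WithLp.equiv 2 (Fin n → ℝ)).symm x

lemma toE_apply {n : ℕ} (x : Fin n → ℝ) (i : Fin n) : toE x i = x i := rfl

lemma dist_eucl {n : ℕ} (x y : EuclideanSpace ℝ (Fin n)) :
    dist x y = Real.sqrt (∑ i, (x i - y i) ^ 2) := by
  rw [EuclideanSpace.dist_eq]
  congr 1
  exact Finset.sum_congr rfl fun i _ => by rw [Real.dist_eq, sq_abs]

lemma dist_toE {n : ℕ} (x y : Fin n → ℝ) :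
    dist (toE x) (toE y) = Real.sqrt (∑ i, (x i - y i) ^ 2) := dist_eucl _ _

lemma norm_toE {n : ℕ} (x : Fin n → ℝ) : ‖toE x‖ = Real.sqrt (∑ i, x i ^ 2) := by
  rw [EuclideanSpace.norm_eq]
  congr 1
  exact Finset.sum_congr rfl fun i _ => by
    rw [toE_apply, Real.norm_eq_abs, sq_abs]

lemma vol_ball (k : ℕ) (x : EuclideanSpace ℝ (Fin k)) {r : ℝ} (hr : 0 < r) :
    volume (Metric.ball x r) =
      ENNReal.ofReal (r ^ k) * volume (Metric.ball (0 : EuclideanSpace ℝ (Fin k)) 1) := by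
  cases k with
  | zero =>
      have h1 : (Metric.ball x r) = Set.univ := Set.eq_univ_of_forall fun y => by
        rw [Metric.mem_ball, dist_eucl]; simpa using hr
      have h2 : (Metric.ball (0 : EuclideanSpace ℝ (Fin 0)) 1) = Set.univ :=
        Set.eq_univ_of_forall fun y => by
          rw [Metric.mem_ball, dist_eucl]; simpa using one_pos
      rw [h1, h2, pow_zero, ENNReal.ofReal_one, one_mul]
  | succ m =>
      haveI : Nontrivial (EuclideanSpace ℝ (Fin (m + 1))) :=
        Module.nontrivial_of_finrank_pos (R := ℝ)
          (by rw [finrank_euclideanSpace_fin]; omega)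
      rw [Measure.addHaar_ball volume x hr.le, finrank_euclideanSpace_fin]

lemma pack {k1 k2 K : ℕ} (hk1 : k1 ≤ K) (hk2 : k2 ≤ K) {ε : ℝ} (hε0 : 0 < ε) (hε1 : ε ≤ 1)
    (s : Set (EuclideanSpace ℝ (Fin k1) × EuclideanSpace ℝ (Fin k2)))
    (hnorm : ∀ p ∈ s, ‖p.1‖ ≤ 1 ∧ ‖p.2‖ ≤ 1)
    (hsep : s.Pairwise fun p q => ε < dist p q) :
    s.Finite ∧ (s.ncard : ℝ) ≤ (3 / ε) ^ (2 * K) := by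
  classical
  set r : ℝ := ε / 2 with hr_def
  have hr0 : 0 < r := by positivity
  set C : ℝ := (3 / ε) ^ (2 * K) with hC_def
  have hC0 : 0 ≤ C := by positivity
  set u1 := volume (Metric.ball (0 : EuclideanSpace ℝ (Fin k1)) 1) with hu1
  set u2 := volume (Metric.ball (0 : EuclideanSpace ℝ (Fin k2)) 1) with hu2
  have hu1pos : u1 ≠ 0 := (Metric.measure_ball_pos volume 0 one_pos).ne'
  have hu2pos : u2 ≠ 0 := (Metric.measure_ball_pos volume 0 one_pos).ne'
  have hu1top : u1 ≠ ⊤ := measure_ball_lt_top.ne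
  have hu2top : u2 ≠ ⊤ := measure_ball_lt_top.ne
  set v : ENNReal := ENNReal.ofReal (r ^ k1) * u1 * (ENNReal.ofReal (r ^ k2) * u2) with hv_def
  have hv0 : v ≠ 0 := by
    rw [hv_def]
    refine mul_ne_zero (mul_ne_zero ?_ hu1pos) (mul_ne_zero ?_ hu2pos) <;>
      exact (ENNReal.ofReal_pos.mpr (by positivity)).ne'
  have hvtop : v ≠ ⊤ := by
    rw [hv_def]
    exact ENNReal.mul_ne_top (ENNReal.mul_ne_top ENNReal.ofReal_ne_top hu1top)
      (ENNReal.mul_ne_top ENNReal.ofReal_ne_top hu2top)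
  have hball : ∀ p : EuclideanSpace ℝ (Fin k1) × EuclideanSpace ℝ (Fin k2),
      volume (Metric.ball p r) = v := by
    intro p
    rw [hv_def, ← ball_prod_same p.1 p.2 r, Measure.volume_eq_prod, Measure.prod_prod,
      vol_ball _ _ hr0, vol_ball _ _ hr0]
  have h1r : (0:ℝ) < 1 + r := by linarith
  have hbig : volume (Metric.ball ((0, 0) : EuclideanSpace ℝ (Fin k1) × EuclideanSpace ℝ (Fin k2)) (1 + r))
      = ENNReal.ofReal ((1 + r) ^ k1) * u1 * (ENNReal.ofReal ((1 + r) ^ k2) * u2) := by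
    rw [← ball_prod_same, Measure.volume_eq_prod, Measure.prod_prod,
      vol_ball _ _ h1r, vol_ball _ _ h1r]
  have key : ∀ t : Finset (EuclideanSpace ℝ (Fin k1) × EuclideanSpace ℝ (Fin k2)),
      ↑t ⊆ s → (t.card : ℝ) ≤ C := by
    intro t ht
    have hdisj : (↑t : Set (EuclideanSpace ℝ (Fin k1) × EuclideanSpace ℝ (Fin k2))).PairwiseDisjoint
        fun p => Metric.ball p r := by
      intro a ha b hb hab
      simp only [Function.onFun]
      refine Metric.ball_disjoint_ball ?_
      have := hsep (ht ha) (ht hb) hab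
      rw [hr_def]
      linarith
    have hsum : ∑ p ∈ t, volume (Metric.ball p r) = volume (⋃ p ∈ t, Metric.ball p r) :=
      (measure_biUnion_finset hdisj fun b _ => measurableSet_ball).symm
    have hsub : (⋃ p ∈ t, Metric.ball p r) ⊆
        Metric.ball ((0, 0) : EuclideanSpace ℝ (Fin k1) × EuclideanSpace ℝ (Fin k2)) (1 + r) := by
      refine Set.iUnion₂_subset fun p hp => Metric.ball_subset_ball' ?_
      have hn := hnorm p (ht hp)
      have hd : dist p ((0, 0) : EuclideanSpace ℝ (Fin k1) × EuclideanSpace ℝ (Fin k2)) ≤ 1 := by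
        rw [show ((0, 0) : EuclideanSpace ℝ (Fin k1) × EuclideanSpace ℝ (Fin k2)) = 0 from rfl,
          dist_zero_right, Prod.norm_def]
        exact max_le hn.1 hn.2
      linarith
    have hcount : (t.card : ENNReal) * v ≤
        ENNReal.ofReal ((1 + r) ^ k1) * u1 * (ENNReal.ofReal ((1 + r) ^ k2) * u2) := by
      calc (t.card : ENNReal) * v = ∑ p ∈ t, volume (Metric.ball p r) := by
            rw [Finset.sum_congr rfl fun p _ => hball p, Finset.sum_const, nsmul_eq_mul]
        _ = volume (⋃ p ∈ t, Metric.ball p r) := hsum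
        _ ≤ _ := by rw [← hbig]; exact measure_mono hsub
    have hrle : 1 + r ≤ (3 / ε) * r := by
      have h32 : (3 / ε) * r = 3 / 2 := by rw [hr_def]; field_simp
      rw [h32, hr_def]; linarith
    have hrealineq : (1 + r) ^ k1 * (1 + r) ^ k2 ≤ C * (r ^ k1 * r ^ k2) := by
      have h3 : (1:ℝ) ≤ 3 / ε := by rw [le_div_iff₀ hε0]; linarith
      have h1 : (1 + r) ^ k1 ≤ ((3 / ε) * r) ^ k1 := pow_le_pow_left₀ h1r.le hrle _
      have h2 : (1 + r) ^ k2 ≤ ((3 / ε) * r) ^ k2 := pow_le_pow_left₀ h1r.le hrle _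
      have h4 : ((3 / ε) * r) ^ k1 * ((3 / ε) * r) ^ k2
          = (3 / ε) ^ (k1 + k2) * (r ^ k1 * r ^ k2) := by
        rw [mul_pow, mul_pow, pow_add]; ring
      have h5 : (3 / ε) ^ (k1 + k2) ≤ C := by
        rw [hC_def]; exact pow_le_pow_right₀ h3 (by omega)
      calc (1 + r) ^ k1 * (1 + r) ^ k2
          ≤ ((3 / ε) * r) ^ k1 * ((3 / ε) * r) ^ k2 :=
            mul_le_mul h1 h2 (by positivity) (by positivity)
        _ = (3 / ε) ^ (k1 + k2) * (r ^ k1 * r ^ k2) := h4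
        _ ≤ C * (r ^ k1 * r ^ k2) := mul_le_mul_of_nonneg_right h5 (by positivity)
    have hVb_le : ENNReal.ofReal ((1 + r) ^ k1) * u1 * (ENNReal.ofReal ((1 + r) ^ k2) * u2)
        ≤ ENNReal.ofReal C * v := by
      have hmain : ENNReal.ofReal ((1 + r) ^ k1) * ENNReal.ofReal ((1 + r) ^ k2)
          ≤ ENNReal.ofReal C * (ENNReal.ofReal (r ^ k1) * ENNReal.ofReal (r ^ k2)) := by
        rw [← ENNReal.ofReal_mul (by positivity : (0:ℝ) ≤ (1 + r) ^ k1),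
          ← ENNReal.ofReal_mul (by positivity : (0:ℝ) ≤ r ^ k1),
          ← ENNReal.ofReal_mul hC0]
        exact ENNReal.ofReal_le_ofReal hrealineq
      calc ENNReal.ofReal ((1 + r) ^ k1) * u1 * (ENNReal.ofReal ((1 + r) ^ k2) * u2)
          = (ENNReal.ofReal ((1 + r) ^ k1) * ENNReal.ofReal ((1 + r) ^ k2)) * (u1 * u2) := by
            ring
        _ ≤ (ENNReal.ofReal C * (ENNReal.ofReal (r ^ k1) * ENNReal.ofReal (r ^ k2))) * (u1 * u2) :=
            mul_le_mul_left hmain _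
        _ = ENNReal.ofReal C * v := by rw [hv_def]; ring
    have hle : (t.card : ENNReal) ≤ ENNReal.ofReal C :=
      (ENNReal.mul_le_mul_iff_left hv0 hvtop).mp (le_trans hcount hVb_le)
    rw [← ENNReal.ofReal_natCast] at hle
    exact (ENNReal.ofReal_le_ofReal_iff hC0).mp hle
  have hfin : s.Finite := by
    by_contra hinf
    obtain ⟨t, hts, hcard⟩ := Set.Infinite.exists_subset_card_eq hinf (⌊C⌋₊ + 1)
    have h := key t hts
    rw [hcard] at h
    have h2 : ⌊C⌋₊ + 1 ≤ ⌊C⌋₊ := Nat.le_floor (by exact_mod_cast h)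
    omega
  refine ⟨hfin, ?_⟩
  rw [Set.ncard_eq_toFinset_card s hfin]
  exact key _ (by simp)

lemma pair_pack {N K : ℕ} {ε : ℝ} (hε0 : 0 < ε) (hε1 : ε ≤ 1)
    (V W : Submodule ℝ (Fin N → ℝ))
    (hVK : Module.finrank ℝ V ≤ K) (hWK : Module.finrank ℝ W ≤ K)
    (P : Set ((Fin N → ℝ) × (Fin N → ℝ)))
    (hP : ∀ p ∈ P, p.1 ∈ V ∧ Real.sqrt (∑ i, p.1 i ^ 2) ≤ 1 ∧
      p.2 ∈ W ∧ Real.sqrt (∑ i, p.2 i ^ 2) ≤ 1)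
    (hsep : P.Pairwise fun p q =>
      ε < max (Real.sqrt (∑ i, (p.1 i - q.1 i) ^ 2)) (Real.sqrt (∑ i, (p.2 i - q.2 i) ^ 2))) :
    P.Finite ∧ (P.ncard : ℝ) ≤ (3 / ε) ^ (2 * K) := by
  classical
  set e : (Fin N → ℝ) ≃ₗ[ℝ] EuclideanSpace ℝ (Fin N) :=
    (WithLp.linearEquiv 2 ℝ (Fin N → ℝ)).symm with he
  have heapp : ∀ x : Fin N → ℝ, e x = toE x := fun x => rfl
  set V' : Submodule ℝ (EuclideanSpace ℝ (Fin N)) := Submodule.map (e : (Fin N → ℝ) →ₗ[ℝ] EuclideanSpace ℝ (Fin N)) V with hV'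
  set W' : Submodule ℝ (EuclideanSpace ℝ (Fin N)) := Submodule.map (e : (Fin N → ℝ) →ₗ[ℝ] EuclideanSpace ℝ (Fin N)) W with hW'
  have hV'K : Module.finrank ℝ V' ≤ K := by
    rw [hV', LinearEquiv.finrank_map_eq]; exact hVK
  have hW'K : Module.finrank ℝ W' ≤ K := by
    rw [hW', LinearEquiv.finrank_map_eq]; exact hWK
  set B1 := (stdOrthonormalBasis ℝ V').repr with hB1
  set B2 := (stdOrthonormalBasis ℝ W').repr with hB2
  set G1 : (Fin N → ℝ) → EuclideanSpace ℝ (Fin (Module.finrank ℝ V')) :=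
    fun x => B1 (V'.orthogonalProjectionOnto (e x)) with hG1def
  set G2 : (Fin N → ℝ) → EuclideanSpace ℝ (Fin (Module.finrank ℝ W')) :=
    fun x => B2 (W'.orthogonalProjectionOnto (e x)) with hG2def
  have hproj1 : ∀ x : Fin N → ℝ, x ∈ V → ∀ hx' : e x ∈ V',
      V'.orthogonalProjectionOnto (e x) = ⟨e x, hx'⟩ := by
    intro x hx hx'
    exact Submodule.orthogonalProjectionOnto_mem_subspace_eq_self (⟨e x, hx'⟩ : V')
  have hproj2 : ∀ x : Fin N → ℝ, x ∈ W → ∀ hx' : e x ∈ W',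
      W'.orthogonalProjectionOnto (e x) = ⟨e x, hx'⟩ := by
    intro x hx hx'
    exact Submodule.orthogonalProjectionOnto_mem_subspace_eq_self (⟨e x, hx'⟩ : W')
  have hG1dist : ∀ x, x ∈ V → ∀ y, y ∈ V →
      dist (G1 x) (G1 y) = Real.sqrt (∑ i, (x i - y i) ^ 2) := by
    intro x hx y hy
    have hx' : e x ∈ V' := Submodule.mem_map_of_mem hx
    have hy' : e y ∈ V' := Submodule.mem_map_of_mem hy
    rw [hG1def]
    simp only
    rw [hproj1 x hx hx', hproj1 y hy hy', LinearIsometryEquiv.dist_map, Subtype.dist_eq]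
    simp only [heapp]
    exact dist_toE x y
  have hG2dist : ∀ x, x ∈ W → ∀ y, y ∈ W →
      dist (G2 x) (G2 y) = Real.sqrt (∑ i, (x i - y i) ^ 2) := by
    intro x hx y hy
    have hx' : e x ∈ W' := Submodule.mem_map_of_mem hx
    have hy' : e y ∈ W' := Submodule.mem_map_of_mem hy
    rw [hG2def]
    simp only
    rw [hproj2 x hx hx', hproj2 y hy hy', LinearIsometryEquiv.dist_map, Subtype.dist_eq]
    simp only [heapp]
    exact dist_toE x y
  have hG1norm : ∀ x, x ∈ V → ‖G1 x‖ = Real.sqrt (∑ i, x i ^ 2) := by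
    intro x hx
    have hx' : e x ∈ V' := Submodule.mem_map_of_mem hx
    rw [hG1def]
    simp only
    rw [hproj1 x hx hx', LinearIsometryEquiv.norm_map, Submodule.coe_norm]
    simp only [heapp]
    exact norm_toE x
  have hG2norm : ∀ x, x ∈ W → ‖G2 x‖ = Real.sqrt (∑ i, x i ^ 2) := by
    intro x hx
    have hx' : e x ∈ W' := Submodule.mem_map_of_mem hx
    rw [hG2def]
    simp only
    rw [hproj2 x hx hx', LinearIsometryEquiv.norm_map, Submodule.coe_norm]
    simp only [heapp]
    exact norm_toE x
  set Φ : ((Fin N → ℝ) × (Fin N → ℝ)) →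
      EuclideanSpace ℝ (Fin (Module.finrank ℝ V')) × EuclideanSpace ℝ (Fin (Module.finrank ℝ W')) :=
    fun p => (G1 p.1, G2 p.2) with hΦ
  have hΦdist : ∀ p ∈ P, ∀ q ∈ P, dist (Φ p) (Φ q) =
      max (Real.sqrt (∑ i, (p.1 i - q.1 i) ^ 2)) (Real.sqrt (∑ i, (p.2 i - q.2 i) ^ 2)) := by
    intro p hp q hq
    obtain ⟨hp1, _, hp2, _⟩ := hP p hp
    obtain ⟨hq1, _, hq2, _⟩ := hP q hq
    rw [hΦ]
    simp only
    rw [Prod.dist_eq, hG1dist _ hp1 _ hq1, hG2dist _ hp2 _ hq2]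
  have hinj : Set.InjOn Φ P := by
    intro p hp q hq hpq
    by_contra hne
    have h : ε < dist (Φ p) (Φ q) := by
      rw [hΦdist p hp q hq]
      exact hsep hp hq hne
    rw [hpq, dist_self] at h
    linarith
  have himg := pack hV'K hW'K hε0 hε1 (Φ '' P)
    (by
      rintro _ ⟨p, hp, rfl⟩
      obtain ⟨hp1, hn1, hp2, hn2⟩ := hP p hp
      constructor
      · show ‖G1 p.1‖ ≤ 1
        rw [hG1norm _ hp1]; exact hn1
      · show ‖G2 p.2‖ ≤ 1
        rw [hG2norm _ hp2]; exact hn2)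
    (by
      rintro _ ⟨p, hp, rfl⟩ _ ⟨q, hq, rfl⟩ hne
      have hpq : p ≠ q := fun h => hne (by rw [h])
      rw [hΦdist p hp q hq]
      exact hsep hp hq hpq)
  refine ⟨Set.Finite.of_finite_image himg.1 hinj, ?_⟩
  rw [← Set.ncard_image_of_injOn hinj]
  exact himg.2

end UoSAux

open UoSAux in
/-- Union-of-subspaces guarantee: if `S` is the union of `L` subspaces of `ℝ^N` of
dimension at most `K` intersected with the unit ball, `σ = 1/√N`, and the
single-measurement ball-pair consistency bound at radius `ε = 3d/(c_o√N)` is at most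
`c_r`, then the probability that some `x,x' ∈ S` with `‖x−x'‖₂ > d` produce identical
`M`-bit quantized measurements is at most `L²·(c_o√N/d)^{2K}·c_r^M`. -/
theorem union_of_subspaces_bound (N K L M : ℕ) (hN : 1 ≤ N) (hK : 1 ≤ K) (hL : 1 ≤ L)
    (hM : 1 ≤ M) (d co cr Δ : ℝ) (hd : 0 < d) (hco : 0 < co)
    (hcr0 : 1 / 2 < cr) (hcr1 : cr < 1) (hΔ : 0 < Δ)
    (V : Fin L → Submodule ℝ (Fin N → ℝ)) (hV : ∀ i, Module.finrank ℝ (V i) ≤ K)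
    (hpair : ∀ x x' : Fin N → ℝ, d ≤ Real.sqrt (∑ i, (x i - x' i) ^ 2) →
      measLaw N (N : NNReal)⁻¹ Δ
          {ω | ∃ u ∈ ballE (3 * d / (co * Real.sqrt N)) x,
               ∃ u' ∈ ballE (3 * d / (co * Real.sqrt N)) x',
                 qmeas Δ ω u = qmeas Δ ω u'} ≤ ENNReal.ofReal cr) :
    (Measure.pi fun _ : Fin M => measLaw N (N : NNReal)⁻¹ Δ)
        {ωs : Fin M → (Fin N → ℝ) × ℝ |
          ∃ x x' : Fin N → ℝ,
            ((∃ i, x ∈ V i) ∧ Real.sqrt (∑ i, x i ^ 2) ≤ 1) ∧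
            ((∃ i, x' ∈ V i) ∧ Real.sqrt (∑ i, x' i ^ 2) ≤ 1) ∧
            d < Real.sqrt (∑ i, (x i - x' i) ^ 2) ∧
            ∀ m, qmeas Δ (ωs m) x = qmeas Δ (ωs m) x'} ≤
      ENNReal.ofReal ((L : ℝ) ^ 2 * (co * Real.sqrt N / d) ^ (2 * K) * cr ^ M) := by
  classical
  set μ1 : Measure ((Fin N → ℝ) × ℝ) := measLaw N (N : NNReal)⁻¹ Δ with hμ1
  haveI hunif : IsProbabilityMeasure (unif Δ) := by
    constructor
    rw [unif, Measure.smul_apply, Measure.restrict_apply MeasurableSet.univ, Set.univ_inter,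
      Real.volume_Icc, smul_eq_mul, sub_zero]
    exact ENNReal.inv_mul_cancel (by simp [hΔ]) ENNReal.ofReal_ne_top
  haveI hμ1prob : IsProbabilityMeasure μ1 := by
    rw [hμ1]
    show IsProbabilityMeasure ((Measure.pi fun _ : Fin N => gaussianReal 0 _).prod (unif Δ))
    infer_instance
  set ε : ℝ := 3 * d / (co * Real.sqrt N) with hepsdef
  have hNpos : (0:ℝ) < (N : ℝ) := by exact_mod_cast hN
  have hsqrtN : (0:ℝ) < Real.sqrt N := Real.sqrt_pos.mpr hNpos
  have hε0 : 0 < ε := by rw [hepsdef]; positivity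
  have hcrpos : (0:ℝ) ≤ cr := by linarith
  by_cases hd2 : 2 ≤ d
  · -- the event is empty
    refine le_trans (measure_mono (show _ ⊆ (∅ : Set (Fin M → (Fin N → ℝ) × ℝ)) from ?_))
      (by simp)
    rintro ωs ⟨x, x', ⟨_, hx1⟩, ⟨_, hx2⟩, hdist, _⟩
    have h1 : Real.sqrt (∑ i, (x i - x' i) ^ 2) ≤ 2 := by
      rw [← dist_toE]
      calc dist (toE x) (toE x')
          ≤ ‖toE x‖ + ‖toE x'‖ := dist_le_norm_add_norm _ _
        _ ≤ 1 + 1 := add_le_add (by rw [norm_toE]; exact hx1) (by rw [norm_toE]; exact hx2)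
        _ = 2 := by norm_num
    linarith
  push_neg at hd2
  by_cases hde : d ≤ 2 * ε
  · exfalso
    set i0 : Fin N := ⟨0, hN⟩ with hi0
    set x1 : Fin N → ℝ := fun t => if t = i0 then d else 0 with hx1
    have hsumsq : ∀ c : ℝ, ∑ t : Fin N, (if t = i0 then c else 0) ^ 2 = c ^ 2 := by
      intro c
      calc ∑ t : Fin N, (if t = i0 then c else 0) ^ 2
          = ∑ t : Fin N, (if t = i0 then c ^ 2 else 0) :=
            Finset.sum_congr rfl fun t _ => by split <;> simp
        _ = c ^ 2 := by
            rw [Finset.sum_ite_eq' Finset.univ i0 fun _ => c ^ 2]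
            simp
    have hdist : d ≤ Real.sqrt (∑ i, ((0 : Fin N → ℝ) i - x1 i) ^ 2) := by
      have hsum : ∑ i, ((0 : Fin N → ℝ) i - x1 i) ^ 2 = d ^ 2 := by
        calc ∑ i, ((0 : Fin N → ℝ) i - x1 i) ^ 2
            = ∑ i : Fin N, (if i = i0 then d else 0) ^ 2 :=
              Finset.sum_congr rfl fun i _ => by
                rw [hx1]; simp only [Pi.zero_apply]; split <;> ring
          _ = d ^ 2 := hsumsq d
      rw [hsum, Real.sqrt_sq hd.le]
    have hev := hpair 0 x1 hdist
    have huniv : {ω : (Fin N → ℝ) × ℝ | ∃ u ∈ ballE ε 0, ∃ u' ∈ ballE ε x1,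
        qmeas Δ ω u = qmeas Δ ω u'} = Set.univ := by
      apply Set.eq_univ_of_forall
      intro ω
      refine ⟨fun t => if t = i0 then d / 2 else 0, ?_, fun t => if t = i0 then d / 2 else 0,
        ?_, rfl⟩
      · show Real.sqrt (∑ i, ((fun t => if t = i0 then d / 2 else 0) i - (0 : Fin N → ℝ) i) ^ 2) ≤ ε
        have hsum : ∑ i, ((fun t => if t = i0 then d / 2 else 0) i - (0 : Fin N → ℝ) i) ^ 2
            = (d / 2) ^ 2 := by
          calc ∑ i, ((fun t => if t = i0 then d / 2 else 0) i - (0 : Fin N → ℝ) i) ^ 2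
              = ∑ i : Fin N, (if i = i0 then d / 2 else 0) ^ 2 :=
                Finset.sum_congr rfl fun i _ => by simp only [Pi.zero_apply]; split <;> ring
            _ = (d / 2) ^ 2 := hsumsq (d / 2)
        rw [hsum, Real.sqrt_sq (by linarith)]
        linarith
      · show Real.sqrt (∑ i, ((fun t => if t = i0 then d / 2 else 0) i - x1 i) ^ 2) ≤ ε
        have hsum : ∑ i, ((fun t => if t = i0 then d / 2 else 0) i - x1 i) ^ 2
            = (d / 2) ^ 2 := by
          calc ∑ i, ((fun t => if t = i0 then d / 2 else 0) i - x1 i) ^ 2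
              = ∑ i : Fin N, (if i = i0 then (d / 2) ^ 2 else 0) :=
                Finset.sum_congr rfl fun i _ => by
                  rw [hx1]; simp only; split <;> ring
            _ = (d / 2) ^ 2 := by
                rw [Finset.sum_ite_eq' Finset.univ i0 fun _ => (d / 2) ^ 2]; simp
        rw [hsum, Real.sqrt_sq (by linarith)]
        linarith
    rw [huniv, measure_univ] at hev
    exact absurd (lt_of_le_of_lt hev (ENNReal.ofReal_lt_one.mpr hcr1)) (lt_irrefl _)
  push_neg at hde
  have hε1 : ε ≤ 1 := by linarith
  -- Zorn: maximal separated subset of the pair set T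
  set T : Set ((Fin N → ℝ) × (Fin N → ℝ)) :=
    {p | (∃ i, p.1 ∈ V i) ∧ Real.sqrt (∑ i, p.1 i ^ 2) ≤ 1 ∧ (∃ i, p.2 ∈ V i) ∧
      Real.sqrt (∑ i, p.2 i ^ 2) ≤ 1 ∧ d < Real.sqrt (∑ i, (p.1 i - p.2 i) ^ 2)} with hT
  set sep : ((Fin N → ℝ) × (Fin N → ℝ)) → ((Fin N → ℝ) × (Fin N → ℝ)) → Prop := fun p q =>
    ε < max (Real.sqrt (∑ i, (p.1 i - q.1 i) ^ 2)) (Real.sqrt (∑ i, (p.2 i - q.2 i) ^ 2))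
    with hsepdef
  obtain ⟨P, hPmax⟩ := zorn_subset {Q | Q ⊆ T ∧ Q.Pairwise sep} (by
    intro c hcS hchain
    refine ⟨⋃₀ c, ⟨Set.sUnion_subset fun s hs => (hcS hs).1, ?_⟩,
      fun s hs => Set.subset_sUnion_of_mem hs⟩
    intro a ha b hb hab
    obtain ⟨s, hsc, has⟩ := ha
    obtain ⟨t, htc, hbt⟩ := hb
    rcases hchain.total hsc htc with h | h
    · exact (hcS htc).2 (h has) hbt hab
    · exact (hcS hsc).2 has (h hbt) hab)
  have hPT : P ⊆ T := hPmax.prop.1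
  have hPsep : P.Pairwise sep := hPmax.prop.2
  have hsymm_sq : ∀ x y : Fin N → ℝ, (∑ i, (x i - y i) ^ 2) = ∑ i, (y i - x i) ^ 2 :=
    fun x y => Finset.sum_congr rfl fun i _ => by ring
  have hcover : ∀ p ∈ T, ∃ q ∈ P, Real.sqrt (∑ i, (p.1 i - q.1 i) ^ 2) ≤ ε ∧
      Real.sqrt (∑ i, (p.2 i - q.2 i) ^ 2) ≤ ε := by
    intro p hp
    by_cases hpP : p ∈ P
    · refine ⟨p, hpP, ?_, ?_⟩ <;> · simp only [sub_self]; simpa using hε0.le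
    · by_contra hno
      push_neg at hno
      have hins : (insert p P) ∈ {Q | Q ⊆ T ∧ Q.Pairwise sep} := by
        refine ⟨Set.insert_subset hp hPT, ?_⟩
        rw [Set.pairwise_insert]
        refine ⟨hPsep, fun q hq hne => ?_⟩
        have hsep_pq : sep p q := by
          rw [hsepdef]
          simp only
          by_cases h1 : Real.sqrt (∑ i, (p.1 i - q.1 i) ^ 2) ≤ ε
          · exact lt_of_lt_of_le (hno q hq h1) (le_max_right _ _)
          · push_neg at h1
            exact lt_of_lt_of_le h1 (le_max_left _ _)
        refine ⟨hsep_pq, ?_⟩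
        rw [hsepdef] at hsep_pq ⊢
        simp only at hsep_pq ⊢
        rwa [hsymm_sq q.1 p.1, hsymm_sq q.2 p.2]
      exact hpP (hPmax.2 hins (Set.subset_insert p P) (Set.mem_insert p P))
  -- events and boxes
  set Aset : ((Fin N → ℝ) × (Fin N → ℝ)) → Set ((Fin N → ℝ) × ℝ) := fun q =>
    {ω | ∃ u ∈ ballE ε q.1, ∃ u' ∈ ballE ε q.2, qmeas Δ ω u = qmeas Δ ω u'} with hAset
  have hAbound : ∀ q ∈ P, μ1 (Aset q) ≤ ENNReal.ofReal cr := fun q hq =>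
    hpair q.1 q.2 (le_of_lt (hPT hq).2.2.2.2)
  set Box : ((Fin N → ℝ) × (Fin N → ℝ)) → Set (Fin M → (Fin N → ℝ) × ℝ) := fun q =>
    Set.univ.pi fun _ : Fin M => toMeasurable μ1 (Aset q) with hBox
  have hBoxbound : ∀ q ∈ P,
      (Measure.pi fun _ : Fin M => μ1) (Box q) ≤ ENNReal.ofReal (cr ^ M) := by
    intro q hq
    rw [hBox]
    simp only
    rw [Measure.pi_pi, Finset.prod_const, Finset.card_univ, Fintype.card_fin,
      measure_toMeasurable, ENNReal.ofReal_pow hcrpos]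
    exact pow_le_pow_left' (hAbound q hq) M
  set Pij : Fin L × Fin L → Set ((Fin N → ℝ) × (Fin N → ℝ)) := fun ij =>
    {q | q ∈ P ∧ q.1 ∈ V ij.1 ∧ q.2 ∈ V ij.2} with hPijdef
  have hPij : ∀ ij, (Pij ij).Finite ∧ ((Pij ij).ncard : ℝ) ≤ (3 / ε) ^ (2 * K) := by
    intro ij
    refine pair_pack hε0 hε1 (V ij.1) (V ij.2) (hV _) (hV _) (Pij ij) ?_ ?_
    · rintro p ⟨hpP, h1, h2⟩
      have := hPT hpP
      exact ⟨h1, this.2.1, h2, this.2.2.2.1⟩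
    · intro p hp q hq hne
      have := hPsep hp.1 hq.1 hne
      rw [hsepdef] at this
      exact this
  set Pfin : Fin L × Fin L → Finset ((Fin N → ℝ) × (Fin N → ℝ)) := fun ij =>
    (hPij ij).1.toFinset with hPfin
  have hEsub : {ωs : Fin M → (Fin N → ℝ) × ℝ |
      ∃ x x' : Fin N → ℝ,
        ((∃ i, x ∈ V i) ∧ Real.sqrt (∑ i, x i ^ 2) ≤ 1) ∧
        ((∃ i, x' ∈ V i) ∧ Real.sqrt (∑ i, x' i ^ 2) ≤ 1) ∧
        d < Real.sqrt (∑ i, (x i - x' i) ^ 2) ∧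
        ∀ m, qmeas Δ (ωs m) x = qmeas Δ (ωs m) x'} ⊆
      ⋃ ij ∈ (Finset.univ : Finset (Fin L × Fin L)), ⋃ q ∈ Pfin ij, Box q := by
    rintro ωs ⟨x, x', ⟨hxV, hx1⟩, ⟨hx'V, hx'1⟩, hdist, hcons⟩
    have hpT : ((x, x') : (Fin N → ℝ) × (Fin N → ℝ)) ∈ T := ⟨hxV, hx1, hx'V, hx'1, hdist⟩
    obtain ⟨q, hqP, hq1, hq2⟩ := hcover _ hpT
    obtain ⟨i, hi⟩ := (hPT hqP).1
    obtain ⟨j, hj⟩ := (hPT hqP).2.2.1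
    simp only [Set.mem_iUnion, exists_prop]
    refine ⟨(i, j), Finset.mem_univ _, q, ?_, ?_⟩
    · rw [hPfin]
      simp only [Set.Finite.mem_toFinset]
      exact ⟨hqP, hi, hj⟩
    · rw [hBox]
      simp only
      rw [Set.mem_univ_pi]
      intro m
      apply subset_toMeasurable
      exact ⟨x, hq1, x', hq2, hcons m⟩
  have h3ε : 3 / ε = co * Real.sqrt N / d := by
    rw [hepsdef]
    field_simp
  refine le_trans (measure_mono hEsub) ?_
  calc (Measure.pi fun _ : Fin M => μ1) (⋃ ij ∈ (Finset.univ : Finset (Fin L × Fin L)),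
          ⋃ q ∈ Pfin ij, Box q)
      ≤ ∑ ij ∈ (Finset.univ : Finset (Fin L × Fin L)),
          (Measure.pi fun _ : Fin M => μ1) (⋃ q ∈ Pfin ij, Box q) :=
        measure_biUnion_finset_le _ _
    _ ≤ ∑ _ij ∈ (Finset.univ : Finset (Fin L × Fin L)),
          ENNReal.ofReal ((3 / ε) ^ (2 * K) * cr ^ M) := by
        refine Finset.sum_le_sum fun ij _ => ?_
        calc (Measure.pi fun _ : Fin M => μ1) (⋃ q ∈ Pfin ij, Box q)
            ≤ ∑ q ∈ Pfin ij, (Measure.pi fun _ : Fin M => μ1) (Box q) :=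
              measure_biUnion_finset_le _ _
          _ ≤ (Pfin ij).card • ENNReal.ofReal (cr ^ M) := by
              refine Finset.sum_le_card_nsmul _ _ _ fun q hq => ?_
              rw [hPfin] at hq
              simp only [Set.Finite.mem_toFinset] at hq
              exact hBoxbound q hq.1
          _ = ((Pfin ij).card : ENNReal) * ENNReal.ofReal (cr ^ M) := nsmul_eq_mul _ _
          _ ≤ ENNReal.ofReal ((3 / ε) ^ (2 * K)) * ENNReal.ofReal (cr ^ M) := by
              refine mul_le_mul_left ?_ _
              rw [← ENNReal.ofReal_natCast]
              refine ENNReal.ofReal_le_ofReal ?_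
              have hcard : ((Pfin ij).card : ℝ) = ((Pij ij).ncard : ℝ) := by
                rw [hPfin]
                norm_cast
                exact (Set.ncard_eq_toFinset_card _ (hPij ij).1).symm
              rw [hcard]
              exact (hPij ij).2
          _ = ENNReal.ofReal ((3 / ε) ^ (2 * K) * cr ^ M) := by
              rw [← ENNReal.ofReal_mul (by positivity)]
    _ = ((L * L : ℕ) : ENNReal) * ENNReal.ofReal ((3 / ε) ^ (2 * K) * cr ^ M) := by
        rw [Finset.sum_const, Finset.card_univ, nsmul_eq_mul]
        norm_num [Fintype.card_prod]
    _ ≤ ENNReal.ofReal ((L : ℝ) ^ 2 * (co * Real.sqrt N / d) ^ (2 * K) * cr ^ M) := by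
        rw [← ENNReal.ofReal_natCast, ← ENNReal.ofReal_mul (by positivity)]
        refine ENNReal.ofReal_le_ofReal (le_of_eq ?_)
        rw [h3ε]
        push_cast
        ring
end
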